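/- Let V be a real Hilbert space, V_n a finite-dimensional subspace and W_m a complete subspace of V with β(V_n, W_m) > 0. Fix ω ∈ W_m, let v*(ω) := (P_{V_n}∘P_{W_m}|_{V_n})^{-1}(P_{V_n} ω) ∈ V_n, and set u*(ω) := v*(ω) + ω − P_{W_m} v*(ω). Then u*(ω) lies in the affine set ω + W_m^⊥ (i.e. P_{W_m} u*(ω) = ω), and u*(ω) is the unique minimizer over all v ∈ ω + W_m^⊥ of the quantity ‖v − P_{V_n} v‖. -/

import Mathlib

/-- With `β(V_n, W_m) > 0`, for `ω ∈ W_m`, the PBDW reconstruction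
`u*(ω) = v*(ω) + ω − P_{W_m} v*(ω)` (where `v*(ω)` is characterized by
`P_{V_n}(P_{W_m} v*(ω)) = P_{V_n} ω`) satisfies `P_{W_m} u*(ω) = ω` (i.e. it lies in
`ω + W_m^⊥`) and is the unique minimizer of `‖v − P_{V_n} v‖` over `v ∈ ω + W_m^⊥`. -/
theorem stmt2 {V : Type*} [NormedAddCommGroup V] [InnerProductSpace ℝ V]
    (Vn Wm : Submodule ℝ V) [FiniteDimensional ℝ Vn] [CompleteSpace Wm]
    (hβ : 0 < sInf {r : ℝ | ∃ v ∈ Vn, v ≠ 0 ∧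
      r = ‖(Submodule.orthogonalProjectionOnto Wm v : V)‖ / ‖v‖})
    (ω : V) (hω : ω ∈ Wm)
    (vstar : Vn)
    (hvstar : Submodule.orthogonalProjectionOnto Vn ((Submodule.orthogonalProjectionOnto Wm (vstar : V) : V))
      = Submodule.orthogonalProjectionOnto Vn ω) :
    ∀ ustar : V,
      ustar = (vstar : V) + ω - (Submodule.orthogonalProjectionOnto Wm (vstar : V) : V) →
      (Submodule.orthogonalProjectionOnto Wm ustar : V) = ω ∧
      (∀ v : V, (Submodule.orthogonalProjectionOnto Wm v : V) = ω →
        ‖ustar - (Submodule.orthogonalProjectionOnto Vn ustar : V)‖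
          ≤ ‖v - (Submodule.orthogonalProjectionOnto Vn v : V)‖) ∧
      (∀ v : V, (Submodule.orthogonalProjectionOnto Wm v : V) = ω →
        ‖v - (Submodule.orthogonalProjectionOnto Vn v : V)‖
          = ‖ustar - (Submodule.orthogonalProjectionOnto Vn ustar : V)‖ → v = ustar) := by
  intro ustar hu
  set e : V := ω - (Submodule.orthogonalProjectionOnto Wm (vstar : V) : V) with he
  have hue : ustar = (vstar : V) + e := by rw [hu, he]; abel
  have hQvstar : (Submodule.orthogonalProjectionOnto Vn (vstar : V) : V) = vstar :=
    Submodule.starProjection_eq_self_iff.mpr vstar.2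
  have hQe : (Submodule.orthogonalProjectionOnto Vn e : V) = 0 := by
    rw [he, map_sub, hvstar]; simp
  have heVnperp : e ∈ Vnᗮ := by
    have h : e - (Submodule.orthogonalProjectionOnto Vn e : V) ∈ Vnᗮ := Submodule.sub_starProjection_mem_orthogonal (K := Vn) e
    rwa [hQe, sub_zero] at h
  have heWm : e ∈ Wm := Submodule.sub_mem _ hω (Submodule.orthogonalProjectionOnto Wm (vstar : V)).2
  have hPu : (Submodule.orthogonalProjectionOnto Wm ustar : V) = ω := by
    have h : Submodule.orthogonalProjectionOnto Wm ustar
        = Submodule.orthogonalProjectionOnto Wm (vstar : V) + Submodule.orthogonalProjectionOnto Wm e := by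
      rw [hue, map_add]
    rw [h]
    push_cast
    rw [show (Submodule.orthogonalProjectionOnto Wm e : V) = e from Submodule.starProjection_eq_self_iff.mpr heWm, he]; abel
  have hQu : (Submodule.orthogonalProjectionOnto Vn ustar : V) = vstar := by
    have h : Submodule.orthogonalProjectionOnto Vn ustar
        = Submodule.orthogonalProjectionOnto Vn (vstar : V) + Submodule.orthogonalProjectionOnto Vn e := by
      rw [hue, map_add]
    rw [h]; push_cast; rw [hQvstar, hQe, add_zero]
  have hud : ustar - (Submodule.orthogonalProjectionOnto Vn ustar : V) = e := by
    rw [hQu, hue]; abel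
  -- decomposition for arbitrary v with P v = ω
  have key : ∀ v : V, (Submodule.orthogonalProjectionOnto Wm v : V) = ω →
      ‖v - (Submodule.orthogonalProjectionOnto Vn v : V)‖ ^ 2
        = ‖e‖ ^ 2 + ‖(v - ustar) - (Submodule.orthogonalProjectionOnto Vn (v - ustar) : V)‖ ^ 2
      ∧ (v - ustar) ∈ Wmᗮ := by
    intro v hPv
    have hwperp : v - ustar ∈ Wmᗮ := by
      have h : (v - ustar) - (Submodule.orthogonalProjectionOnto Wm (v - ustar) : V) ∈ Wmᗮ := Submodule.sub_starProjection_mem_orthogonal (K := Wm) (v - ustar)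
      have h2 : ((Submodule.orthogonalProjectionOnto Wm (v - ustar)) : V) = 0 := by
        rw [map_sub]; push_cast; rw [hPv, hPu, sub_self]
      rwa [h2, sub_zero] at h
    refine ⟨?_, hwperp⟩
    have hdecomp : v - (Submodule.orthogonalProjectionOnto Vn v : V)
        = e + ((v - ustar) - (Submodule.orthogonalProjectionOnto Vn (v - ustar) : V)) := by
      have h : Submodule.orthogonalProjectionOnto Vn v
          = Submodule.orthogonalProjectionOnto Vn ustar + Submodule.orthogonalProjectionOnto Vn (v - ustar) := by
        rw [map_sub]; abel
      rw [h]; push_cast; rw [hQu, hue]; abel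
    have hinner : (inner ℝ (e) ((v - ustar) - (Submodule.orthogonalProjectionOnto Vn (v - ustar) : V)) : ℝ) = 0 := by
      have h1 : (inner ℝ (e) (v - ustar) : ℝ) = 0 := (Submodule.mem_orthogonal _ _).mp hwperp e heWm
      have h2 : (inner ℝ (e) ((Submodule.orthogonalProjectionOnto Vn (v - ustar) : V)) : ℝ) = 0 := by
        rw [real_inner_comm]
        exact heVnperp _ (Submodule.coe_mem _)
      rw [inner_sub_right, h1, h2, sub_zero]
    rw [hdecomp, norm_add_sq_real, hinner]
    ring
  refine ⟨hPu, ?_, ?_⟩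
  · intro v hPv
    obtain ⟨hsq, -⟩ := key v hPv
    rw [hud]
    have h : ‖e‖ ^ 2 ≤ ‖v - (Submodule.orthogonalProjectionOnto Vn v : V)‖ ^ 2 := by
      rw [hsq]; nlinarith [sq_nonneg ‖(v - ustar) - (Submodule.orthogonalProjectionOnto Vn (v - ustar) : V)‖]
    have := Real.sqrt_le_sqrt h
    rwa [Real.sqrt_sq (norm_nonneg _), Real.sqrt_sq (norm_nonneg _)] at this
  · intro v hPv heq
    obtain ⟨hsq, hwperp⟩ := key v hPv
    rw [hud] at heq
    have hz : ‖(v - ustar) - (Submodule.orthogonalProjectionOnto Vn (v - ustar) : V)‖ ^ 2 = 0 := by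
      rw [heq] at hsq; nlinarith
    have hmem : v - ustar ∈ Vn := by
      have h0 : (v - ustar) - (Submodule.orthogonalProjectionOnto Vn (v - ustar) : V) = 0 := by
        have := pow_eq_zero_iff (n := 2) (by norm_num) |>.mp hz
        exact norm_eq_zero.mp this
      have : v - ustar = (Submodule.orthogonalProjectionOnto Vn (v - ustar) : V) :=
        sub_eq_zero.mp h0
      rw [this]; exact Submodule.coe_mem _
    by_contra hne
    have hwne : v - ustar ≠ 0 := sub_ne_zero.mpr hne
    have hPw : (Submodule.orthogonalProjectionOnto Wm (v - ustar) : V) = 0 := by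
      rw [Submodule.orthogonalProjectionOnto_apply_of_mem_orthogonal hwperp]
      simp
    have h0mem : (0 : ℝ) ∈ {r : ℝ | ∃ v ∈ Vn, v ≠ 0 ∧
        r = ‖(Submodule.orthogonalProjectionOnto Wm v : V)‖ / ‖v‖} := by
      exact ⟨v - ustar, hmem, hwne, by rw [hPw]; simp⟩
    have hbdd : BddBelow {r : ℝ | ∃ v ∈ Vn, v ≠ 0 ∧
        r = ‖(Submodule.orthogonalProjectionOnto Wm v : V)‖ / ‖v‖} := by
      refine ⟨0, fun r hr => ?_⟩
      obtain ⟨u, -, -, rfl⟩ := hr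
      positivity
    have := csInf_le hbdd h0mem
    linarith
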